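/- Let n ≥ 1 and let e be a projection in D_n. Then e is unitarily equivalent in D_n to the constant function with value e(0): there exists a unitary u ∈ D_n such that e = u · (const e(0)) · u*, where const e(0) denotes the constant function [0,1] → M_{2n}(ℂ) with value e(0) (which belongs to D_n since e(0) is block-diagonal). (Lemma 10.4 of the paper.) -/

import Mathlib

open unitInterval

open scoped Matrix.Norms.L2Operator NNReal

noncomputable instance (n : ℕ) :
    CStarAlgebra (Matrix (Fin n ⊕ Fin n) (Fin n ⊕ Fin n) ℂ) := { }
noncomputable instance (n : ℕ) :
    PartialOrder (Matrix (Fin n ⊕ Fin n) (Fin n ⊕ Fin n) ℂ) := CStarAlgebra.spectralOrder _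
noncomputable instance (n : ℕ) :
    StarOrderedRing (Matrix (Fin n ⊕ Fin n) (Fin n ⊕ Fin n) ℂ) :=
  CStarAlgebra.spectralOrderedRing _
noncomputable instance (n : ℕ) :
    PartialOrder C(I, Matrix (Fin n ⊕ Fin n) (Fin n ⊕ Fin n) ℂ) := CStarAlgebra.spectralOrder _
noncomputable instance (n : ℕ) :
    StarOrderedRing C(I, Matrix (Fin n ⊕ Fin n) (Fin n ⊕ Fin n) ℂ) :=
  CStarAlgebra.spectralOrderedRing _

section AuxLemma

variable {B C : Type*} [CStarAlgebra B] [PartialOrder B] [StarOrderedRing B]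
  [CStarAlgebra C] [PartialOrder C] [StarOrderedRing C]

lemma close_proj_conj (p q : B) (hps : star p = p) (hpi : p * p = p)
    (hqs : star q = q) (hqi : q * q = q) (hd : ‖q - p‖ < 1)
    (π : B →⋆ₐ[ℂ] C) (hπ : Continuous π) (hπpq : π p = π q) :
    ∃ v : B, v * star v = 1 ∧ star v * v = 1 ∧ q = v * p * star v ∧ π v = 1 := by
  have hp2 : ∀ z : B, p * (p * z) = p * z := fun z => by rw [← mul_assoc, hpi]
  have hq2 : ∀ z : B, q * (q * z) = q * z := fun z => by rw [← mul_assoc, hqi]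
  set w : B := q*p + (1-q)*(1-p) with hw
  set x : B := (q - p) * (q - p) with hx
  set a : B := 1 - x with ha
  have hws : star w = p*q + (1-p)*(1-q) := by
    simp [hw, star_mul, star_sub, hps, hqs, mul_comm]
  have haw : star w * w = a := by
    rw [hws, hw, ha, hx]
    simp only [mul_add, add_mul, mul_sub, sub_mul, one_mul, mul_one, mul_assoc, hpi, hqi, hp2, hq2]
    abel
  have hwa : w * star w = a := by
    rw [hws, hw, ha, hx]
    simp only [mul_add, add_mul, mul_sub, sub_mul, one_mul, mul_one, mul_assoc, hpi, hqi, hp2, hq2]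
    abel
  have hwp : w * p = q * w := by
    rw [hw]
    simp only [mul_add, add_mul, mul_sub, sub_mul, one_mul, mul_one, mul_assoc, hpi, hqi, hp2, hq2]
    abel
  have hpx : p * x = x * p := by
    rw [hx]
    simp only [mul_add, add_mul, mul_sub, sub_mul, one_mul, mul_one, mul_assoc, hpi, hqi, hp2, hq2]
    abel
  have hxs : star x = x := by rw [hx, star_mul, star_sub, hps, hqs]
  have hx0 : 0 ≤ x := by
    have h : x = star (q - p) * (q - p) := by rw [star_sub, hps, hqs, hx]
    rw [h]; exact star_mul_self_nonneg _
  have hxnorm : ‖x‖ < 1 := by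
    refine lt_of_le_of_lt (norm_mul_le _ _) ?_
    nlinarith [norm_nonneg (q - p)]
  have hxsa : IsSelfAdjoint x := hxs
  have hxle : x ≤ algebraMap ℝ B ‖x‖ := hxsa.le_algebraMap_norm_self
  have hr : (0:ℝ) < 1 - ‖x‖ := by linarith
  have hmap_nonneg : 0 ≤ algebraMap ℝ B (1 - ‖x‖) := by
    have h1 : algebraMap ℝ B (1 - ‖x‖) =
        star (Real.sqrt (1 - ‖x‖) • (1:B)) * (Real.sqrt (1 - ‖x‖) • (1:B)) := by
      rw [star_smul, star_one, star_trivial, smul_mul_smul_comm, one_mul,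
        Real.mul_self_sqrt hr.le, Algebra.algebraMap_eq_smul_one]
    rw [h1]; exact star_mul_self_nonneg _
  have hle : algebraMap ℝ B (1 - ‖x‖) ≤ a := by
    rw [ha, map_sub, map_one]
    exact sub_le_sub_left hxle 1
  have ha0 : 0 ≤ a := hmap_nonneg.trans hle
  have hau : IsUnit a :=
    CStarAlgebra.isUnit_of_le _ hle
      ⟨hmap_nonneg, (isUnit_iff_ne_zero.mpr hr.ne').map (algebraMap ℝ B)⟩
  have hza : (0 : ℝ≥0) ∉ spectrum ℝ≥0 a := (spectrum.zero_notMem_iff ℝ≥0).mpr hau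
  set b : B := a ^ (-(1/2) : ℝ) with hb
  have hb0 : (0:B) ≤ b := CFC.rpow_nonneg
  have hbsa : star b = b := IsSelfAdjoint.of_nonneg hb0
  have hbab : b * a * b = 1 := CFC.conjugate_rpow_neg_one_half a ⟨ha0, hau⟩
  have hbb : b * b = a ^ (-1 : ℝ) := by
    rw [hb, ← CFC.rpow_add hau]; norm_num
  have hbbinv : (b * b) * a = 1 := by
    rw [hbb]
    have h := CFC.rpow_neg_mul_rpow 1 ⟨ha0, hau⟩
    rwa [CFC.rpow_one a ha0] at h
  have habb : a * (b * b) = 1 := by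
    rw [hbb]
    have h := CFC.rpow_mul_rpow_neg 1 ⟨ha0, hau⟩
    rwa [CFC.rpow_one a ha0] at h
  -- commutation of b with p via conjugation by the symmetry s = p + p - 1
  set s : B := p + p - 1 with hs
  have hss : s * s = 1 := by
    rw [hs]
    simp only [mul_add, add_mul, mul_sub, sub_mul, one_mul, mul_one, mul_assoc, hpi, hqi, hp2, hq2]
    abel
  have hss' : ∀ z : B, s * (s * z) = z := fun z => by rw [← mul_assoc, hss, one_mul]
  have hssa : star s = s := by rw [hs, star_sub, star_add, hps, star_one]
  have hap : a * p = p * a := by rw [ha, sub_mul, mul_sub, one_mul, mul_one, hpx]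
  have has' : a * s = s * a := by
    rw [hs]
    simp only [mul_add, add_mul, mul_sub, sub_mul, mul_one, one_mul, hap]
  have hsa : s * a * s = a := by
    rw [mul_assoc, has', hss']
  let φ : B →⋆ₐ[ℂ] B :=
    { toFun := fun z => s * z * s
      map_one' := by show s * 1 * s = 1; rw [mul_one, hss]
      map_mul' := fun z1 z2 => by
        show s * (z1 * z2) * s = (s * z1 * s) * (s * z2 * s)
        simp only [mul_assoc]
        rw [hss']
      map_zero' := by show s * 0 * s = 0; rw [mul_zero, zero_mul]
      map_add' := fun z1 z2 => by
        show s * (z1 + z2) * s = s * z1 * s + s * z2 * s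
        rw [mul_add, add_mul]
      commutes' := fun r => by
        show s * (algebraMap ℂ B r) * s = algebraMap ℂ B r
        rw [← Algebra.commutes r s, mul_assoc, hss, mul_one]
      map_star' := fun z => by
        show s * star z * s = star (s * z * s)
        simp only [star_mul, hssa, mul_assoc] }
  have hφcont : Continuous φ := by
    show Continuous fun z : B => s * z * s
    fun_prop
  have hφa : φ a = a := hsa
  have hbdef : b = cfc (fun t : ℝ≥0 => t ^ (-(1/2) : ℝ)) a := CFC.rpow_def
  have hf : ContinuousOn (fun t : ℝ≥0 => t ^ (-(1/2) : ℝ)) (spectrum ℝ≥0 a) :=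
    NNReal.continuousOn_rpow_const (Or.inl hza)
  have hφa0 : (0:B) ≤ φ a := by rw [hφa]; exact ha0
  have hsbs : s * b * s = b := by
    have h := StarAlgHomClass.map_cfc (q := fun z : B => 0 ≤ z) φ
      (fun t : ℝ≥0 => t ^ (-(1/2) : ℝ)) a hf hφcont ha0 hφa0
    calc s * b * s = φ b := rfl
      _ = b := by rw [hbdef, h, hφa, ← hbdef]
  have hsb : s * b = b * s := by
    have h := congrArg (fun z => z * s) hsbs
    simpa only [mul_assoc, hss, mul_one] using h
  have hpb : p * b = b * p := by
    have h2 : p * b + p * b = b * p + b * p := by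
      have hsb' : (p + p - 1) * b = b * (p + p - 1) := by rw [← hs]; exact hsb
      have h := congrArg (fun z => z + b) hsb'
      simp only [sub_mul, mul_sub, add_mul, mul_add, one_mul, mul_one, sub_add_cancel] at h
      exact h
    have h3 := congrArg (fun z => (2:ℝ)⁻¹ • z) h2
    simpa only [← two_smul ℝ, smul_smul, inv_mul_cancel₀ (two_ne_zero (α := ℝ)), one_smul] using h3
  have hwcomm : a * w = w * a := by rw [← hwa, mul_assoc, haw, hwa]
  set c : B := b * b with hc
  have hcw : w * c = c * w := by
    have hawc : a * (w * c) = w := by rw [← mul_assoc, hwcomm, mul_assoc, habb, mul_one]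
    calc w * c = (c * a) * (w * c) := by rw [hbbinv, one_mul]
      _ = c * (a * (w * c)) := by rw [mul_assoc]
      _ = c * w := by rw [hawc]
  set v : B := w * b with hv
  have hvs : star v = b * star w := by rw [hv, star_mul, hbsa]
  have h2 : star v * v = 1 := by
    rw [hvs, hv, mul_assoc, ← mul_assoc (star w), haw, ← mul_assoc, hbab]
  have h1 : v * star v = 1 := by
    rw [hvs, hv]
    calc w * b * (b * star w) = w * (b * (b * star w)) := by rw [mul_assoc]
      _ = w * ((b * b) * star w) := by rw [← mul_assoc b b]
      _ = w * (c * star w) := by rw [← hc]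
      _ = (w * c) * star w := by rw [← mul_assoc]
      _ = (c * w) * star w := by rw [hcw]
      _ = c * (w * star w) := by rw [mul_assoc]
      _ = c * a := by rw [hwa]
      _ = 1 := hbbinv
  have hvp : v * p = q * v := by
    rw [hv, mul_assoc, ← hpb, ← mul_assoc, hwp, mul_assoc]
  have hqeq : q = v * p * star v := by
    have h : v * p * star v = q := by rw [hvp, mul_assoc, h1, mul_one]
    exact h.symm
  have hπw : π w = 1 := by
    have hq' : π q * π q = π q := by rw [← map_mul, hqi]
    rw [hw, map_add, map_mul, map_mul, map_sub, map_sub, map_one, hπpq]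
    simp only [mul_add, add_mul, mul_sub, sub_mul, one_mul, mul_one, hq']
    abel
  have hπa : π a = 1 := by
    rw [ha, map_sub, map_one, hx, map_mul, map_sub, hπpq, sub_self, zero_mul, sub_zero]
  have hπb : π b = 1 := by
    have h0 : (0:C) ≤ π a := by rw [hπa]; simpa using star_mul_self_nonneg (1:C)
    have h := StarAlgHomClass.map_cfc (q := fun z : C => 0 ≤ z) π
      (fun t : ℝ≥0 => t ^ (-(1/2) : ℝ)) a hf hπ ha0 h0
    rw [hbdef, h, hπa, ← CFC.rpow_def (a := (1:C)) (y := (-(1/2):ℝ))]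
    exact CFC.one_rpow
  exact ⟨v, h1, h2, hqeq, by rw [hv, map_mul, hπw, hπb, one_mul]⟩

end AuxLemma

/-- `D_n`: the C*-subalgebra of `C([0,1], M_{2n}(ℂ))` (indices split as
`Fin n ⊕ Fin n`) consisting of the continuous functions `x` such that `x(0)` is
block-diagonal with two `n × n` blocks. -/
def Dn (n : ℕ) : Set C(I, Matrix (Fin n ⊕ Fin n) (Fin n ⊕ Fin n) ℂ) :=
  {x | ∀ i j : Fin n ⊕ Fin n, i.isLeft ≠ j.isLeft → x 0 i j = 0}

/-- **Lemma 10.4.** Every projection `e` of `D_n` is unitarily equivalent in `D_n` to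
the constant function with value `e(0)` (which belongs to `D_n` since `e(0)` is
block-diagonal): there is a unitary `u ∈ D_n` with `e = u · (const e(0)) · u*`. -/
theorem stmt11 (n : ℕ) (hn : 1 ≤ n)
    (e : C(I, Matrix (Fin n ⊕ Fin n) (Fin n ⊕ Fin n) ℂ))
    (he : e ∈ Dn n) (he_sa : star e = e) (he_idem : e * e = e) :
    ∃ u : C(I, Matrix (Fin n ⊕ Fin n) (Fin n ⊕ Fin n) ℂ), u ∈ Dn n ∧
      u * star u = 1 ∧ star u * u = 1 ∧
      ContinuousMap.const I (e 0) ∈ Dn n ∧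
      e = u * ContinuousMap.const I (e 0) * star u := by
  classical
  set Mn := Matrix (Fin n ⊕ Fin n) (Fin n ⊕ Fin n) ℂ with hMn
  let mulI : C(I × I, I) :=
    ⟨fun st => st.1 * st.2, by
      apply Continuous.subtype_mk
      exact (continuous_subtype_val.comp continuous_fst).mul
        (continuous_subtype_val.comp continuous_snd)⟩
  let E : C(I, C(I, Mn)) := (e.comp mulI).curry
  have hE : ∀ s t : I, E s t = e (s * t) := fun s t => rfl
  have hE0 : ∀ s : I, (E s) 0 = e 0 := fun s => by
    rw [hE, mul_zero]
  have hEstar : ∀ s : I, star (E s) = E s := fun s => by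
    refine ContinuousMap.ext fun t => ?_
    calc (star (E s)) t = star (E s t) := ContinuousMap.star_apply _ _
      _ = (star e) (s * t) := (ContinuousMap.star_apply e _).symm
      _ = e (s * t) := by rw [he_sa]
      _ = E s t := (hE s t).symm
  have hEidem : ∀ s : I, E s * E s = E s := fun s => by
    refine ContinuousMap.ext fun t => ?_
    calc (E s * E s) t = E s t * E s t := ContinuousMap.mul_apply _ _ _
      _ = (e * e) (s * t) := (ContinuousMap.mul_apply e e _).symm
      _ = e (s * t) := by rw [he_idem]
      _ = E s t := (hE s t).symm
  let π : C(I, Mn) →⋆ₐ[ℂ] Mn :=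
    { toFun := fun f => f 0
      map_one' := rfl
      map_mul' := fun f g => rfl
      map_zero' := rfl
      map_add' := fun f g => rfl
      commutes' := fun c => rfl
      map_star' := fun f => rfl }
  have hπcont : Continuous π := by
    show Continuous fun f : C(I, Mn) => f 0
    exact ContinuousEvalConst.continuous_eval_const (0 : I)
  let S : Set I := {s | ∃ u : C(I, Mn),
    u * star u = 1 ∧ star u * u = 1 ∧ E s = u * E 0 * star u ∧ u 0 = 1}
  have step : ∀ s s' : I, ‖E s' - E s‖ < 1 → s ∈ S → s' ∈ S := by
    rintro s s' hd ⟨u, hu1, hu2, hu3, hu4⟩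
    obtain ⟨v, hv1, hv2, hv3, hv4⟩ :=
      close_proj_conj (E s) (E s') (hEstar s) (hEidem s) (hEstar s') (hEidem s') hd π hπcont
        (by show (E s) 0 = (E s') 0; rw [hE0, hE0])
    have hv4' : v 0 = 1 := hv4
    refine ⟨v * u, ?_, ?_, ?_, ?_⟩
    · rw [star_mul, mul_assoc, ← mul_assoc u, hu1, one_mul, hv1]
    · rw [star_mul, mul_assoc, ← mul_assoc (star v), hv2, one_mul, hu2]
    · rw [hv3, hu3, star_mul]
      simp only [mul_assoc]
    · show (v * u) 0 = 1
      rw [ContinuousMap.mul_apply, hv4', hu4, one_mul]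
  have hS0 : (0 : I) ∈ S := by
    have t1 : star (1 : C(I, Mn)) = 1 := by exact star_one _
    refine ⟨1, by simp [t1], by simp [t1], by simp [t1], ?_⟩
    simp
  have hU : ∀ s : I, {s' : I | ‖E s' - E s‖ < 1} ∈ nhds s := by
    intro s
    have hc : Continuous fun s' : I => ‖E s' - E s‖ := (E.continuous.sub continuous_const).norm
    have hopen : IsOpen {s' : I | ‖E s' - E s‖ < 1} := isOpen_lt hc continuous_const
    have h0 : ‖E s - E s‖ < 1 := by simp
    exact hopen.mem_nhds h0
  have hScl : IsClopen S := by
    constructor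
    · apply isClosed_of_closure_subset
      intro s hs
      obtain ⟨s', hs'⟩ := mem_closure_iff_nhds.mp hs _ (hU s)
      exact step s' s (by rw [norm_sub_rev]; exact hs'.1) hs'.2
    · rw [isOpen_iff_mem_nhds]
      intro s hs
      exact Filter.mem_of_superset (hU s) (fun s' h => step s s' h hs)
  have hSuniv : S = Set.univ := hScl.eq_univ ⟨0, hS0⟩
  obtain ⟨u, hu1, hu2, hu3, hu4⟩ : (1 : I) ∈ S := by rw [hSuniv]; trivial
  have hE1 : E 1 = e := by
    refine ContinuousMap.ext fun t => ?_
    rw [hE, one_mul]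
  have hE0' : E 0 = ContinuousMap.const I (e 0) := by
    refine ContinuousMap.ext fun t => ?_
    rw [hE, ContinuousMap.const_apply, zero_mul]
  refine ⟨u, ?_, hu1, hu2, ?_, ?_⟩
  · intro i j hij
    rw [hu4]
    exact Matrix.one_apply_ne (fun h => hij (by rw [h]))
  · intro i j hij
    show (ContinuousMap.const I (e 0)) 0 i j = 0
    rw [ContinuousMap.const_apply]
    exact he i j hij
  · rw [← hE0', ← hE1]; exact hu3
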